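/- Let B, Z: ℝ → ℝ be continuous with B(0) = Z(0) = 0, suppose lim_{x → -∞} B(x)/x = a exists, and suppose liminf_{x → -∞} Z(x)/x = b > a. Then liminf_{x → -∞} D(Z,B)(x)/x ≥ b. -/

import Mathlib

open Filter

/-- Queue length: `Q(Z,B)(y) = sup_{x ≤ y} [(B(y)-B(x)) - (Z(y)-Z(x))]`. -/
noncomputable def Qmap (Z B : ℝ → ℝ) (y : ℝ) : ℝ :=
  sSup ((fun x => (B y - B x) - (Z y - Z x)) '' Set.Iic y)

/-- Departure map: `D(Z,B)(y) = Z(y) + Q(Z,B)(y) - Q(Z,B)(0)`. -/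
noncomputable def Dmap (Z B : ℝ → ℝ) (y : ℝ) : ℝ :=
  Z y + Qmap Z B y - Qmap Z B 0

private lemma key_lemma (B Z : ℝ → ℝ) (hB : Continuous B) (hZ : Continuous Z)
    (hB0 : B 0 = 0) (hZ0 : Z 0 = 0) (a : ℝ)
    (ha : Tendsto (fun x => B x / x) atBot (nhds a))
    (d e : ℝ) (hd : a < d) (he : e < d)
    (hZd : ∀ᶠ x in atBot, d ≤ Z x / x) :
    ∀ᶠ y in atBot, e ≤ Dmap Z B y / y ∧ 0 ≤ Qmap Z B y := by
  set ε := min ((d - e)/2) ((d - a)/2) with hεdef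
  have hε : 0 < ε := lt_min (by linarith) (by linarith)
  have hε1 : ε ≤ (d - e)/2 := min_le_left _ _
  have hε2 : ε ≤ (d - a)/2 := min_le_right _ _
  set c := d - a - ε with hcdef
  have hc : 0 < c := by rw [hcdef]; linarith
  have hneg : ∀ᶠ x : ℝ in atBot, x < 0 := eventually_lt_atBot 0
  have hBlo : ∀ᶠ x in atBot, a - ε < B x / x :=
    ha.eventually (eventually_gt_nhds (by linarith))
  have hBhi : ∀ᶠ x in atBot, B x / x < a + ε :=
    ha.eventually (eventually_lt_nhds (by linarith))
  have hW : ∀ᶠ x in atBot, Z x - B x ≤ c * x := by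
    filter_upwards [hZd, hBhi, hneg] with x h1 h2 h3
    have hZx : Z x ≤ d * x := (le_div_iff_of_neg h3).mp h1
    have hBx : (a + ε) * x ≤ B x := (div_le_iff_of_neg h3).mp h2.le
    have hcx : c * x = d * x - (a + ε) * x := by rw [hcdef]; ring
    linarith
  obtain ⟨M0, hM0⟩ := eventually_atBot.mp (hW.and hneg)
  set M := min M0 (-1 : ℝ) with hMdef
  have hMneg : M < 0 := lt_of_le_of_lt (min_le_right _ _) (by norm_num)
  have hMW : ∀ x ≤ M, Z x - B x ≤ c * x ∧ x < 0 :=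
    fun x hx => hM0 x (le_trans hx (min_le_left _ _))
  -- Q(0) ≥ 0
  have hset0 : ((fun x => (B 0 - B x) - (Z 0 - Z x)) '' Set.Iic 0)
      = (fun x => Z x - B x) '' Set.Iic 0 := by
    apply Set.image_congr
    intro x _
    rw [hB0, hZ0]; ring
  have hbdd0 : BddAbove ((fun x => Z x - B x) '' Set.Iic 0) := by
    have hsplit : Set.Iic (0:ℝ) ⊆ Set.Iic M ∪ Set.Icc M 0 := by
      intro x hx
      rcases le_total x M with h | h
      · exact Or.inl h
      · exact Or.inr ⟨h, hx⟩
    apply BddAbove.mono (Set.image_mono hsplit)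
    rw [Set.image_union]
    apply BddAbove.union
    · refine ⟨0, ?_⟩
      rintro _ ⟨x, hx, rfl⟩
      have h := hMW x hx
      have hx0 : x ≤ 0 := le_trans hx hMneg.le
      have : c * x ≤ 0 := mul_nonpos_of_nonneg_of_nonpos hc.le hx0
      simp only [Set.mem_Iic] at *
      linarith [h.1]
    · exact (isCompact_Icc.image_of_continuousOn ((hZ.sub hB).continuousOn)).bddAbove
  have hQ0 : 0 ≤ Qmap Z B 0 := by
    unfold Qmap
    rw [hset0]
    have := le_csSup hbdd0 (Set.mem_image_of_mem (fun x => Z x - B x)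
      (Set.mem_Iic.mpr (le_refl (0:ℝ))))
    simpa [hZ0, hB0] using this
  filter_upwards [eventually_le_atBot M, hBlo, hneg] with y hyM hyB hyneg
  have hub : ∀ z ∈ (fun x => (B y - B x) - (Z y - Z x)) '' Set.Iic y,
      z ≤ c * y - (Z y - B y) := by
    rintro _ ⟨x, hx, rfl⟩
    simp only [Set.mem_Iic] at hx
    have hx' := hMW x (le_trans hx hyM)
    have hcx : c * x ≤ c * y := mul_le_mul_of_nonneg_left hx hc.le
    show B y - B x - (Z y - Z x) ≤ c * y - (Z y - B y)
    have hrw : B y - B x - (Z y - Z x) = (Z x - B x) - (Z y - B y) := by ring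
    rw [hrw]
    linarith [hx'.1]
  have hne : ((fun x => (B y - B x) - (Z y - Z x)) '' Set.Iic y).Nonempty :=
    ⟨_, Set.mem_image_of_mem _ (Set.mem_Iic.mpr (le_refl y))⟩
  have hbddy : BddAbove ((fun x => (B y - B x) - (Z y - Z x)) '' Set.Iic y) := ⟨_, hub⟩
  have hQle : Qmap Z B y ≤ c * y - (Z y - B y) := csSup_le hne hub
  have hQge : 0 ≤ Qmap Z B y := by
    have := le_csSup hbddy (Set.mem_image_of_mem _ (Set.mem_Iic.mpr (le_refl y)))
    simpa [Qmap] using this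
  refine ⟨?_, hQge⟩
  have hBy : B y ≤ (a - ε) * y := (le_div_iff_of_neg hyneg).mp hyB.le
  rw [le_div_iff_of_neg hyneg]
  have hDy : Dmap Z B y ≤ (d - 2*ε) * y := by
    unfold Dmap
    have hrw : (d - 2*ε) * y = c * y + (a - ε) * y := by rw [hcdef]; ring
    linarith
  have hde : (d - 2*ε) * y ≤ e * y :=
    mul_le_mul_of_nonpos_right (by linarith) hyneg.le
  linarith

/-- If `lim_{x→-∞} B(x)/x = a` and `liminf_{x→-∞} Z(x)/x = b > a`, then
`liminf_{x→-∞} D(Z,B)(x)/x ≥ b`. -/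
theorem stmt8 (B Z : ℝ → ℝ) (hB : Continuous B) (hZ : Continuous Z)
    (hB0 : B 0 = 0) (hZ0 : Z 0 = 0) (a b : ℝ) (hab : a < b)
    (ha : Tendsto (fun x => B x / x) atBot (nhds a))
    (hb : liminf (fun x => Z x / x) atBot = b) :
    b ≤ liminf (fun x => Dmap Z B x / x) atBot := by
  set S := {t : ℝ | ∀ᶠ x in atBot, t ≤ Z x / x} with hSdef
  have hSmono : ∀ t ∈ S, ∀ t' ≤ t, t' ∈ S :=
    fun t ht t' ht' => ht.mono fun x hx => le_trans ht' hx
  have hliminf : liminf (fun x => Z x / x) atBot = sSup S := liminf_eq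
  have hneg : ∀ᶠ x : ℝ in atBot, x < 0 := eventually_lt_atBot 0
  by_cases hSne : S.Nonempty
  · by_cases hSbdd : BddAbove S
    · -- Case A: nice case
      have hsupb : sSup S = b := by rw [← hliminf, hb]
      -- coboundedness of D/x
      have hfreq : ∃ᶠ y in atBot, Z y / y < b + 1 := by
        by_contra hcon
        rw [not_frequently] at hcon
        have hmem : (b+1) ∈ S := hcon.mono fun x hx => not_lt.mp hx
        have := le_csSup hSbdd hmem
        rw [hsupb] at this
        linarith
      obtain ⟨d0, hd0S, hd0⟩ := exists_lt_of_lt_csSup hSne (show a < sSup S by rw [hsupb]; exact hab)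
      have hkey0 := key_lemma B Z hB hZ hB0 hZ0 a ha d0 (d0-1) hd0 (by linarith) hd0S
      have hinv : Tendsto (fun y : ℝ => y⁻¹) atBot (nhds 0) := by
        have h := ((tendsto_inv_atTop_zero (𝕜 := ℝ)).comp tendsto_neg_atBot_atTop).neg
        simpa [Function.comp_def, inv_neg] using h
      have hQtend : Tendsto (fun y : ℝ => Qmap Z B 0 / y) atBot (nhds 0) := by
        have h := (tendsto_const_nhds (α := ℝ) (x := Qmap Z B 0) (f := atBot (α := ℝ))).mul hinv
        simpa [div_eq_mul_inv] using h
      have hQ0ev : ∀ᶠ y : ℝ in atBot, -1 < Qmap Z B 0 / y :=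
        hQtend.eventually (eventually_gt_nhds (by norm_num))
      have hco : IsCoboundedUnder (· ≥ ·) atBot (fun x => Dmap Z B x / x) := by
        apply IsCoboundedUnder.of_frequently_le (a := b + 2)
        apply (hfreq.and_eventually ((hkey0.and hneg).and hQ0ev)).mono
        rintro y ⟨h1, ⟨⟨-, hQy⟩, hyneg⟩, hQ0y⟩
        rw [div_le_iff_of_neg hyneg]
        have hZy : (b+1) * y < Z y := (div_lt_iff_of_neg hyneg).mp h1
        have hQ0y' : Qmap Z B 0 < -1 * y := (lt_div_iff_of_neg hyneg).mp hQ0y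
        unfold Dmap
        nlinarith
      have main : ∀ e, e < b → e ≤ liminf (fun x => Dmap Z B x / x) atBot := by
        intro e he
        obtain ⟨d, hdS, hd⟩ := exists_lt_of_lt_csSup hSne
          (show max a e < sSup S by rw [hsupb]; exact max_lt hab he)
        have hd1 : a < d := lt_of_le_of_lt (le_max_left _ _) hd
        have hd2 : e < d := lt_of_le_of_lt (le_max_right _ _) hd
        exact le_liminf_of_le hco
          ((key_lemma B Z hB hZ hB0 hZ0 a ha d e hd1 hd2 hdS).mono fun y hy => hy.1)
      by_contra hcon
      push_neg at hcon
      have := main ((liminf (fun x => Dmap Z B x / x) atBot + b)/2) (by linarith)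
      linarith
    · -- Case B: S unbounded above
      have hSuniv : ∀ t : ℝ, t ∈ S := by
        intro t
        obtain ⟨s, hsS, hs⟩ := not_bddAbove_iff.mp hSbdd t
        exact hSmono s hsS t hs.le
      have hb0 : b = 0 := by
        have hSu : S = Set.univ := Set.eq_univ_of_forall hSuniv
        rw [← hb, hliminf, hSu, Real.sSup_univ]
      have hSD : ∀ e : ℝ, ∀ᶠ y in atBot, e ≤ Dmap Z B y / y := by
        intro e
        have hd1 : a < max (a+1) (e+1) := lt_of_lt_of_le (by linarith) (le_max_left _ _)
        have hd2 : e < max (a+1) (e+1) := lt_of_lt_of_le (by linarith) (le_max_right _ _)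
        exact (key_lemma B Z hB hZ hB0 hZ0 a ha (max (a+1) (e+1)) e hd1 hd2
          (hSuniv _)).mono fun y hy => hy.1
      have hDset : ¬ BddAbove {t : ℝ | ∀ᶠ n in atBot, t ≤ Dmap Z B n / n} := by
        rw [not_bddAbove_iff]
        intro t
        exact ⟨t + 1, hSD (t+1), by linarith⟩
      have : liminf (fun x => Dmap Z B x / x) atBot = 0 := by
        rw [liminf_eq, Real.sSup_of_not_bddAbove hDset]
      rw [this, hb0]
  · -- Case C: S empty (degenerate: liminf is junk value 0)
    have hfreq : ∀ t : ℝ, ∃ᶠ x in atBot, Z x / x < t := by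
      intro t
      by_contra hcon
      rw [not_frequently] at hcon
      exact hSne ⟨t, hcon.mono fun x hx => not_lt.mp hx⟩
    have hBlo : ∀ᶠ x in atBot, a - 1 < B x / x :=
      ha.eventually (eventually_gt_nhds (by linarith))
    have hQ : ∀ y, Qmap Z B y = 0 := by
      intro y
      unfold Qmap
      apply Real.sSup_of_not_bddAbove
      rw [not_bddAbove_iff]
      intro K
      set t := max (K + (Z y - B y)) 0 + 1 with htdef
      have ht : 0 < t := by positivity
      have htK : K + (Z y - B y) < t := lt_of_le_of_lt (le_max_left _ _) (by rw [htdef]; linarith)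
      set c := a - 1 - t with hcdef
      have hev : ∀ᶠ x : ℝ in atBot, x ≤ min y (-1) ∧ (a - 1 < B x / x ∧ x < 0) :=
        (eventually_le_atBot _).and (hBlo.and hneg)
      obtain ⟨x, hx1, ⟨hx2, ⟨hx3, hx4⟩⟩⟩ := ((hfreq c).and_eventually hev).exists
      have hxy : x ≤ y := le_trans hx2 (min_le_left _ _)
      have hxm1 : x ≤ -1 := le_trans hx2 (min_le_right _ _)
      have hZx : c * x < Z x := (div_lt_iff_of_neg hx4).mp hx1
      have hBx : B x < (a - 1) * x := (lt_div_iff_of_neg hx4).mp hx3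
      have hWx : t * (-x) < Z x - B x := by
        have hrw : c * x - (a-1) * x = t * (-x) := by rw [hcdef]; ring
        linarith
      have ht1 : t * 1 ≤ t * (-x) := mul_le_mul_of_nonneg_left (by linarith) ht.le
      refine ⟨(fun x => (B y - B x) - (Z y - Z x)) x,
        Set.mem_image_of_mem _ (Set.mem_Iic.mpr hxy), ?_⟩
      simp only
      nlinarith
    have hDZ : (fun x => Dmap Z B x / x) = fun x => Z x / x := by
      funext x
      rw [Dmap, hQ, hQ 0]
      ring_nf
    rw [hDZ, hb]
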